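/- Let n be a positive integer, let Λ be a finitely generated additive submonoid of ℚⁿ that is not a group (i.e., not closed under negation), and let A be an integral domain. Then the semigroup ring D = A[Λ] admits a nontrivial ℕ-grading; that is, there exist additive subgroups D_c of D for c ∈ ℕ such that D = ⊕_{c ∈ ℕ} D_c, D_c · D_{c'} ⊆ D_{c+c'} for all c, c' ∈ ℕ, and D ≠ D₀. -/

import Mathlib

universe u

/-- A commutative ring `D` is *Egyptian* if every nonzero `d : D` is a sum of reciprocals
`d = 1/d₁ + ⋯ + 1/dₙ` of finitely many pairwise distinct nonzero elements `dᵢ` of `D`, the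
equality holding in any field in which `D` embeds.  (For an integral domain `D` this is
equivalent to the usual definition, in which the equality is required in the fraction field
of `D`: such an equality holds in one field containing `D` iff it holds in all of them.) -/
def IsEgyptian (D : Type u) [CommRing D] : Prop :=
  ∀ d : D, d ≠ 0 → ∃ s : Finset D, (∀ i ∈ s, i ≠ 0) ∧
    ∀ (K : Type u) [Field K] (φ : D →+* K), Function.Injective φ →
      φ d = ∑ i ∈ s, (φ i)⁻¹

/-- A domain `D` is *generically Egyptian* if `D[1/f]` is Egyptian for some nonzero `f : D`. -/
def IsGenericallyEgyptian (D : Type u) [CommRing D] : Prop :=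
  ∃ f : D, f ≠ 0 ∧ IsEgyptian (Localization.Away f)

/-- A domain `D` is *locally Egyptian* if there is a finite set of generators of the unit
ideal of `D` such that inverting any one of them yields an Egyptian ring. -/
def IsLocallyEgyptian (D : Type u) [CommRing D] : Prop :=
  ∃ s : Finset D, Ideal.span (s : Set D) = ⊤ ∧
    ∀ f ∈ s, IsEgyptian (Localization.Away f)

open Matrix

section Farkas

variable {n : ℕ}

def InCone (l : List (Fin n → ℚ)) (v : Fin n → ℚ) : Prop :=
  ∃ c : Fin l.length → ℚ, (∀ i, 0 ≤ c i) ∧ v = ∑ i, c i • l.get i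

lemma inCone_cons {w : Fin n → ℚ} {l : List (Fin n → ℚ)} {v : Fin n → ℚ}
    (C : ℚ) (hC : 0 ≤ C) (c : Fin l.length → ℚ) (hc : ∀ i, 0 ≤ c i)
    (hv : v = C • w + ∑ i, c i • l.get i) : InCone (w :: l) v := by
  refine ⟨Fin.cases C c, ?_, ?_⟩
  · intro i; induction i using Fin.cases <;> simp [hC, hc _]
  · rw [hv]; simp [Fin.sum_univ_succ]

lemma farkas_aux : ∀ (k : ℕ) (l : List (Fin n → ℚ)) (_ : l.length = k) (v : Fin n → ℚ),
    ¬ InCone l v → ∃ f : Fin n → ℚ, (∀ s ∈ l, 0 ≤ f ⬝ᵥ s) ∧ f ⬝ᵥ v < 0 := by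
  intro k
  induction k with
  | zero =>
    intro l hl v hv
    rcases List.length_eq_zero_iff.mp hl with rfl
    have hv0 : v ≠ 0 := by
      rintro rfl; exact hv ⟨Fin.elim0, fun i => i.elim0, by simp⟩
    refine ⟨-v, by simp, ?_⟩
    have h1 : 0 ≤ v ⬝ᵥ v := Finset.sum_nonneg fun i _ => mul_self_nonneg _
    have h2 : v ⬝ᵥ v ≠ 0 := fun h => hv0 (dotProduct_self_eq_zero.mp h)
    have : (0:ℚ) < v ⬝ᵥ v := lt_of_le_of_ne h1 (Ne.symm h2)
    simpa [neg_dotProduct] using this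
  | succ k ih =>
    rintro (_ | ⟨w, l⟩) hl v hv
    · simp at hl
    simp only [List.length_cons, Nat.succ.injEq] at hl
    have hvl : ¬ InCone l v := by
      rintro ⟨c, hc, rfl⟩
      exact hv (inCone_cons 0 le_rfl c hc (by simp))
    obtain ⟨f, hfl, hfv⟩ := ih l hl v hvl
    by_cases hfw : 0 ≤ f ⬝ᵥ w
    · refine ⟨f, ?_, hfv⟩
      intro s hs
      rcases List.mem_cons.mp hs with rfl | hs
      · exact hfw
      · exact hfl s hs
    push_neg at hfw
    set π : (Fin n → ℚ) → (Fin n → ℚ) := fun x => x - ((f ⬝ᵥ x) / (f ⬝ᵥ w)) • w with hπ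
    have hπv : ¬ InCone (l.map π) (π v) := by
      rintro ⟨c, hc, hcv⟩
      have hlen : (l.map π).length = l.length := List.length_map _
      set c' : Fin l.length → ℚ := fun i => c (Fin.cast hlen.symm i) with hc'def
      have hsum : ∑ i, c i • (l.map π).get i = ∑ i, c' i • π (l.get i) := by
        rw [← (Fin.castOrderIso hlen.symm).toEquiv.sum_comp]
        apply Finset.sum_congr rfl
        intro i _
        simp [c', List.getElem_map]
      rw [hsum] at hcv
      have hc' : ∀ i, 0 ≤ c' i := fun i => hc _
      set C : ℚ := (f ⬝ᵥ v - ∑ i, c' i * (f ⬝ᵥ l.get i)) / (f ⬝ᵥ w) with hC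
      have hvsum : v = C • w + ∑ i, c' i • l.get i := by
        have hsplit : v = π v + ((f ⬝ᵥ v) / (f ⬝ᵥ w)) • w := by simp [hπ]
        rw [hsplit, hcv]
        have hterm : ∀ i : Fin l.length, c' i • π (l.get i)
            = c' i • l.get i - (c' i * ((f ⬝ᵥ l.get i) / (f ⬝ᵥ w))) • w := by
          intro i; simp [hπ, smul_sub, smul_smul]
        rw [Finset.sum_congr rfl fun i _ => hterm i, Finset.sum_sub_distrib, hC]
        simp only [← mul_div_assoc]
        rw [← Finset.sum_smul, ← Finset.sum_div, sub_div, sub_smul]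
        abel
      have hCpos : 0 ≤ C := by
        have hnum : f ⬝ᵥ v - ∑ i, c' i * (f ⬝ᵥ l.get i) < 0 := by
          have : 0 ≤ ∑ i, c' i * (f ⬝ᵥ l.get i) :=
            Finset.sum_nonneg fun i _ => mul_nonneg (hc' i) (hfl _ (l.get_mem _))
          linarith
        rw [hC]
        exact le_of_lt (div_pos_of_neg_of_neg hnum hfw)
      exact hv (inCone_cons C hCpos c' hc' hvsum)
    obtain ⟨g, hgl, hgv⟩ := ih (l.map π) (by simp [hl]) (π v) hπv
    set h : Fin n → ℚ := g - ((g ⬝ᵥ w) / (f ⬝ᵥ w)) • f with hh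
    have hkey : ∀ x, h ⬝ᵥ x = g ⬝ᵥ (π x) := by
      intro x
      simp [hh, hπ, sub_dotProduct, smul_dotProduct, dotProduct_sub, dotProduct_smul]
      ring
    refine ⟨h, ?_, ?_⟩
    · intro s hs
      rcases List.mem_cons.mp hs with rfl | hs'
      · rw [hkey]
        have : π s = 0 := by simp [hπ, div_self hfw.ne]
        simp [this]
      · rw [hkey]; exact hgl (π s) (List.mem_map_of_mem hs')
    · rw [hkey]; exact hgv

end Farkas

lemma nat_of_den_dvd {q : ℚ} (hq : 0 ≤ q) {m : ℕ} (h : q.den ∣ m) : ∃ k : ℕ, (m : ℚ) * q = k := by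
  obtain ⟨t, rfl⟩ := h
  refine ⟨t * q.num.toNat, ?_⟩
  have h1 : (q.den : ℚ) * q = q.num := by rw [mul_comm]; exact_mod_cast Rat.mul_den_eq_num q
  have h2 : (q.num.toNat : ℤ) = q.num := Int.toNat_of_nonneg (Rat.num_nonneg.mpr hq)
  have h3 : ((q.den * t : ℕ) : ℚ) = (q.den : ℚ) * t := by push_cast; ring
  rw [h3, mul_comm (q.den:ℚ) (t:ℚ), mul_assoc, h1]
  have h4 : ((t * q.num.toNat : ℕ) : ℚ) = (t : ℚ) * ((q.num.toNat : ℤ) : ℚ) := by push_cast; ring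
  rw [h4, h2]


/-- If `Λ` is a finitely generated additive submonoid of `ℚⁿ` that is not a group (not
closed under negation) and `A` is an integral domain, then the semigroup ring `D = A[Λ]`
admits a nontrivial `ℕ`-grading: an internal direct sum decomposition `D = ⊕_{c ∈ ℕ} 𝒜 c`
into additive subgroups with `𝒜 c * 𝒜 c' ⊆ 𝒜 (c + c')` and `𝒜 0 ≠ D`. -/
theorem statement4 (n : ℕ) (hn : 0 < n) (Λ : AddSubmonoid (Fin n → ℚ))
    (hfg : Λ.FG) (hΛ : ∃ x ∈ Λ, -x ∉ Λ) (A : Type u) [CommRing A] [IsDomain A] :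
    ∃ 𝒜 : ℕ → AddSubgroup (AddMonoidAlgebra A Λ),
      DirectSum.IsInternal 𝒜 ∧
      (∀ c c' : ℕ, ∀ x ∈ 𝒜 c, ∀ y ∈ 𝒜 c', x * y ∈ 𝒜 (c + c')) ∧
      𝒜 0 ≠ ⊤ := by
  classical
  obtain ⟨S, hS⟩ := hfg
  obtain ⟨x, hx, hnx⟩ := hΛ
  set L : List (Fin n → ℚ) := S.toList with hL
  have hLmem : ∀ s ∈ L, s ∈ Λ := by
    intro s hs
    rw [← hS]
    exact AddSubmonoid.subset_closure (by simpa [hL] using hs)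
  -- Step 1: -x is not in the rational cone generated by L
  have hcone : ¬ InCone L (-x) := by
    rintro ⟨c, hc, hsum⟩
    set N : ℕ := ∏ i, (c i).den with hN
    have hNpos : 0 < N := Finset.prod_pos fun i _ => (c i).pos
    -- each N * c i is a natural number
    have hk : ∀ i, ∃ k : ℕ, (N : ℚ) * c i = k := fun i =>
      nat_of_den_dvd (hc i) (Finset.dvd_prod_of_mem _ (Finset.mem_univ i))
    choose k hk' using hk
    have hmem : N • (-x) ∈ Λ := by
      have : N • (-x) = ∑ i, k i • L.get i := by
        rw [hsum, Finset.smul_sum]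
        apply Finset.sum_congr rfl
        intro i _
        rw [← Nat.cast_smul_eq_nsmul ℚ N, ← Nat.cast_smul_eq_nsmul ℚ (k i), smul_smul, hk' i]
      rw [this]
      exact AddSubmonoid.sum_mem _ fun i _ =>
        AddSubmonoid.nsmul_mem _ (hLmem _ (L.get_mem _)) _
    have : -x ∈ Λ := by
      have hxx : -x = N • (-x) + (N - 1) • x := by
        have h1 : (1:ℕ) ≤ N := hNpos
        have h2 : N • x = (N-1) • x + x := by
          conv_lhs => rw [← Nat.sub_add_cancel h1]
          rw [succ_nsmul]
        rw [smul_neg, h2]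
        abel
      rw [hxx]
      exact AddSubmonoid.add_mem _ hmem (AddSubmonoid.nsmul_mem _ hx _)
    exact hnx this
  -- Step 2: Farkas gives a functional nonnegative on L and positive at x
  obtain ⟨f, hfL, hfx⟩ := farkas_aux L.length L rfl (-x) hcone
  rw [dotProduct_neg] at hfx
  replace hfx : 0 < f ⬝ᵥ x := by linarith
  -- Step 3: common denominator
  set M : ℕ := ∏ s ∈ S, (f ⬝ᵥ s).den with hM
  have hMpos : 0 < M := Finset.prod_pos fun s _ => (f ⬝ᵥ s).pos
  -- the "integrality" submonoid
  set P : AddSubmonoid (Fin n → ℚ) :=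
    { carrier := {y | 0 ≤ f ⬝ᵥ y ∧ ∃ m : ℕ, (M : ℚ) * (f ⬝ᵥ y) = m}
      zero_mem' := ⟨by simp, 0, by simp⟩
      add_mem' := by
        rintro a b ⟨ha1, ma, hma⟩ ⟨hb1, mb, hmb⟩
        refine ⟨by rw [dotProduct_add]; positivity, ma + mb, ?_⟩
        rw [dotProduct_add, mul_add, hma, hmb]
        push_cast; ring } with hP
  have hΛP : ∀ y ∈ Λ, y ∈ P := by
    rw [← hS]
    intro y hy
    refine AddSubmonoid.closure_le.mpr ?_ hy
    intro s hs
    have hs' : s ∈ L := by simpa [hL] using hs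
    exact ⟨hfL s hs', nat_of_den_dvd (hfL s hs') (Finset.dvd_prod_of_mem _ hs)⟩
  -- Step 4: the degree map Λ →+ ℕ
  have hdeg : ∀ y : Λ, ∃ m : ℕ, (M : ℚ) * (f ⬝ᵥ (y : Fin n → ℚ)) = m :=
    fun y => (hΛP y y.2).2
  choose deg hdegspec using hdeg
  have hqinj : Function.Injective (Nat.cast : ℕ → ℚ) := Nat.cast_injective
  have hdeg0 : deg 0 = 0 := by
    apply hqinj
    rw [← hdegspec 0]
    simp
  have hdegadd : ∀ y z : Λ, deg (y + z) = deg y + deg z := by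
    intro y z
    apply hqinj
    rw [Nat.cast_add, ← hdegspec y, ← hdegspec z, ← hdegspec (y + z)]
    have : ((y + z : Λ) : Fin n → ℚ) = (y : Fin n → ℚ) + z := rfl
    rw [this, dotProduct_add]
    ring
  set degHom : Λ →+ ℕ := { toFun := deg, map_zero' := hdeg0, map_add' := hdegadd } with hdegHom
  -- Step 5: the grading
  refine ⟨fun c => (AddMonoidAlgebra.gradeBy A (⇑degHom) c).toAddSubgroup, ?_, ?_, ?_⟩
  · exact AddMonoidAlgebra.gradeBy.isInternal degHom
  · intro c c' a ha b hb
    rw [Submodule.mem_toAddSubgroup] at ha hb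
    exact (Submodule.mem_toAddSubgroup _).mpr
      (SetLike.mul_mem_graded (A := AddMonoidAlgebra.gradeBy A (⇑degHom)) ha hb)
  · intro htop
    have h1 : (AddMonoidAlgebra.single (⟨x, hx⟩ : Λ) (1 : A) : AddMonoidAlgebra A Λ) ∈
        AddMonoidAlgebra.gradeBy A (⇑degHom) 0 := by
      have := AddSubgroup.mem_top (AddMonoidAlgebra.single (⟨x, hx⟩ : Λ) (1 : A))
      rw [← htop] at this
      exact this
    have h2 : degHom ⟨x, hx⟩ = 0 := by
      apply h1
      show (⟨x, hx⟩ : Λ) ∈ (Finsupp.single (⟨x, hx⟩ : Λ) (1 : A)).support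
      rw [Finsupp.support_single_ne_zero _ (one_ne_zero : (1:A) ≠ 0)]
      exact Finset.mem_singleton_self _
    have h3 : (M : ℚ) * (f ⬝ᵥ x) = 0 := by
      have := hdegspec ⟨x, hx⟩
      rw [show degHom ⟨x, hx⟩ = deg ⟨x, hx⟩ from rfl] at h2
      rw [h2] at this
      simpa using this
    have : (0:ℚ) < (M : ℚ) * (f ⬝ᵥ x) := by positivity
    rw [h3] at this
    exact lt_irrefl 0 this
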